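/- Let α ∈ [0,1) and define T : (Fin 3 → ℝ) → (Fin 3 → ℝ) by (T v) 0 = α·max(v 1, v 2), (T v) 1 = 1 + α·(v 1), (T v) 2 = −1 + α·(v 2), and let v⁰ : Fin 3 → ℝ be given by v⁰ 0 = 1, v⁰ 1 = 2, v⁰ 2 = −2. Then for every n ≥ 1, sp(Tⁿ v⁰ − T^{n−1} v⁰) = 2·α^{n−1}·|2α − 1| = α^{n−1}·sp(T v⁰ − v⁰). (Hence the span contraction estimate sp(v_{n,α} − v_{n−1,α}) ≤ (αγ)^{n−1} sp(v_{1,α} − v⁰) holds with equality for this MDP, for which γ = 1.) -/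
import Mathlib

open Finset

/-- Span seminorm `sp(u) = max_x u(x) - min_x u(x)` on `Fin m → ℝ`. -/
noncomputable def sp {m : ℕ} [NeZero m] (u : Fin m → ℝ) : ℝ :=
  (univ.sup' univ_nonempty u) - (univ.inf' univ_nonempty u)

/-- Bellman optimality operator of the 3-state MDP of Example 1. -/
noncomputable def Tex1 (α : ℝ) (v : Fin 3 → ℝ) : Fin 3 → ℝ :=
  ![α * max (v 1) (v 2), 1 + α * v 1, -1 + α * v 2]

noncomputable def hseq (α : ℝ) (n : ℕ) : ℝ := (∑ i ∈ Finset.range n, α^i) + 2*α^n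

noncomputable def gseq (α : ℝ) : ℕ → ℝ
  | 0 => 1
  | n+1 => α * hseq α n

lemma hseq_nonneg (α : ℝ) (hα0 : 0 ≤ α) (n : ℕ) : 0 ≤ hseq α n := by
  have h1 : 0 ≤ ∑ i ∈ Finset.range n, α^i :=
    Finset.sum_nonneg fun i _ => pow_nonneg hα0 i
  have h2 : 0 ≤ 2*α^n := by positivity
  unfold hseq; linarith

lemma iter_eq (α : ℝ) (hα0 : 0 ≤ α) (n : ℕ) :
    (Tex1 α)^[n] ![(1 : ℝ), 2, -2] = ![gseq α n, hseq α n, -(hseq α n)] := by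
  induction n with
  | zero =>
    funext x
    fin_cases x <;> simp [gseq, hseq]
  | succ n ih =>
    rw [Function.iterate_succ_apply', ih]
    funext x
    have hmax : max (hseq α n) (-(hseq α n)) = hseq α n :=
      max_eq_left (by linarith [hseq_nonneg α hα0 n])
    have hstep : hseq α (n+1) = 1 + α * hseq α n := by
      simp only [hseq, geom_sum_succ]; ring
    fin_cases x <;> simp [Tex1, gseq, hmax, hstep] <;> ring

lemma sp_ccc (c : ℝ) : sp ![c, c, -c] = 2 * |c| := by
  have hu : (univ : Finset (Fin 3)) = {0, 1, 2} := rfl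
  rcases le_total 0 c with hc | hc
  · simp [sp, hu, abs_of_nonneg hc]
    rw [max_eq_left (by linarith), min_eq_right (by linarith)]
    ring
  · simp [sp, hu, abs_of_nonpos hc]
    rw [max_eq_right (by linarith), min_eq_left (by linarith)]
    ring

theorem stmt16 (α : ℝ) (hα0 : 0 ≤ α) (hα1 : α < 1) (n : ℕ) (hn : 1 ≤ n) :
    sp ((Tex1 α)^[n] ![(1 : ℝ), 2, -2] - (Tex1 α)^[n - 1] ![(1 : ℝ), 2, -2]) =
      2 * α ^ (n - 1) * |2 * α - 1| ∧
    2 * α ^ (n - 1) * |2 * α - 1| =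
      α ^ (n - 1) * sp (Tex1 α ![(1 : ℝ), 2, -2] - ![(1 : ℝ), 2, -2]) := by
  obtain ⟨m, rfl⟩ : ∃ m, n = m + 1 := ⟨n - 1, (Nat.succ_pred_eq_of_pos hn).symm⟩
  simp only [Nat.add_sub_cancel]
  have key : (Tex1 α)^[m+1] ![(1 : ℝ), 2, -2] - (Tex1 α)^[m] ![(1 : ℝ), 2, -2] =
      ![α^m * (2*α - 1), α^m * (2*α - 1), -(α^m * (2*α - 1))] := by
    rw [iter_eq α hα0, iter_eq α hα0]
    funext x
    have hg : gseq α (m+1) - gseq α m = α^m * (2*α-1) := by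
      cases m with
      | zero => simp [gseq, hseq]; ring
      | succ k =>
        simp only [gseq]
        have : hseq α (k+1) - hseq α k = α^k * (2*α-1) := by
          simp [hseq, Finset.sum_range_succ]; ring
        rw [show α * hseq α (k+1) - α * hseq α k = α * (hseq α (k+1) - hseq α k) by ring,
          this, pow_succ]; ring
    have hh : hseq α (m+1) - hseq α m = α^m * (2*α-1) := by
      simp [hseq, Finset.sum_range_succ]; ring
    fin_cases x <;> simp [Pi.sub_apply] <;> linarith
  rw [key, sp_ccc]
  have hT : Tex1 α ![(1 : ℝ), 2, -2] - ![(1 : ℝ), 2, -2] =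
      ![2*α - 1, 2*α - 1, -(2*α - 1)] := by
    funext x
    fin_cases x <;> simp [Tex1] <;> ring
  rw [hT, sp_ccc]
  constructor
  · rw [abs_mul, abs_of_nonneg (pow_nonneg hα0 m)]; ring
  · ring
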